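/- Let f = x_i^{u_i} x_j^{u_j} − x_k^{u_k} x_l^{u_l} be a primitive binomial of I_A with i, j, k, l pairwise distinct, 0 < u_i < c_i and 0 < u_k < c_k. If the A-degree u_i a_i + u_j a_j of f is minimal among the A-degrees of all primitive binomials of I_A (i.e., u_i a_i + u_j a_j ≤ deg_A(g) for every primitive binomial g of I_A), then f is an indispensable binomial of J = I_A ∩ k[x_i,x_j,x_k,x_l]. -/

import Mathlib

open MvPolynomial Finsupp

variable (K : Type*) [Field K]

/-- The `A`-degree of an exponent vector `u ∈ ℕ^n` with respect to `a_1, …, a_n ∈ ℕ`, namely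
`∑ i, u i * a i`. -/
def degN {n : ℕ} (a : Fin n → ℕ) (u : Fin n →₀ ℕ) : ℕ :=
  ∑ i, u i * a i

/-- The defining ideal `I_A` of the monomial curve `x_i = t^{a_i}`: the ideal generated by all
binomials `x^u - x^v` with `∑ u_i a_i = ∑ v_i a_i` (equivalently, the kernel of
`k[x_1,…,x_n] → k[t]`, `x_i ↦ t^{a_i}`). -/
noncomputable def curveIdeal {n : ℕ} (a : Fin n → ℕ) : Ideal (MvPolynomial (Fin n) K) :=
  Ideal.span { f | ∃ u v : Fin n →₀ ℕ, degN a u = degN a v ∧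
    f = monomial u (1 : K) - monomial v (1 : K) }

/-- `c` is the critical exponent of the variable `x_i`: the least positive integer `c` with
`c * a_i ∈ ∑_{j ≠ i} ℕ a_j`. -/
def IsCritExp {n : ℕ} (a : Fin n → ℕ) (i : Fin n) (c : ℕ) : Prop :=
  IsLeast { m : ℕ | 0 < m ∧ ∃ u : Fin n →₀ ℕ, u i = 0 ∧ m * a i = degN a u } c

/-- `f` is a critical binomial of `I_A` with respect to `x_i` (where `c` is the vector of
critical exponents): `f = x_i^{c_i} - ∏_{j ≠ i} x_j^{u_{ij}} ∈ I_A`. -/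
def IsCritBinom {n : ℕ} (a c : Fin n → ℕ) (i : Fin n) (f : MvPolynomial (Fin n) K) : Prop :=
  ∃ u : Fin n →₀ ℕ, u i = 0 ∧
    f = monomial (Finsupp.single i (c i)) (1 : K) - monomial u (1 : K) ∧
    f ∈ curveIdeal K a

/-- The critical ideal `C_A`: the ideal generated by all critical binomials of `I_A`. -/
noncomputable def criticalIdeal {n : ℕ} (a c : Fin n → ℕ) :
    Ideal (MvPolynomial (Fin n) K) :=
  Ideal.span { f | ∃ i : Fin n, IsCritBinom K a c i f }

/-- `S` is a set of binomials generating `J`. -/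
def IsBinomGenSet {σ : Type*} (J : Ideal (MvPolynomial σ K)) (S : Set (MvPolynomial σ K)) :
    Prop :=
  (∀ f ∈ S, ∃ u v : σ →₀ ℕ, f = monomial u (1 : K) - monomial v (1 : K)) ∧
  Ideal.span S = J

/-- The monomial `x^u` is an indispensable monomial of `J`: every set of binomials generating `J`
contains a binomial one of whose monomials is `x^u`. -/
def IndispMonomial {σ : Type*} (J : Ideal (MvPolynomial σ K)) (u : σ →₀ ℕ) : Prop :=
  ∀ S : Set (MvPolynomial σ K), IsBinomGenSet K J S → ∃ f ∈ S, u ∈ f.support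

/-- `f` is an indispensable binomial of `J`: every set of binomials generating `J` contains
`f` or `-f`. -/
def IndispBinomial {σ : Type*} (J : Ideal (MvPolynomial σ K)) (f : MvPolynomial σ K) : Prop :=
  ∀ S : Set (MvPolynomial σ K), IsBinomGenSet K J S → f ∈ S ∨ -f ∈ S

/-- `x^u - x^v` is a primitive binomial of `I_A`: it is a nonzero binomial of `I_A` and there is
no other nonzero binomial `x^{u'} - x^{v'} ∈ I_A` with `x^{u'} ∣ x^u` and `x^{v'} ∣ x^v`. -/
def IsPrimitive {n : ℕ} (a : Fin n → ℕ) (u v : Fin n →₀ ℕ) : Prop :=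
  u ≠ v ∧ (monomial u (1 : K) - monomial v (1 : K)) ∈ curveIdeal K a ∧
  ∀ u' v' : Fin n →₀ ℕ, u' ≤ u → v' ≤ v → u' ≠ v' →
    (monomial u' (1 : K) - monomial v' (1 : K)) ∈ curveIdeal K a → u' = u ∧ v' = v

lemma degN_eq_sum {n : ℕ} (a : Fin n → ℕ) (u : Fin n →₀ ℕ) :
    degN a u = u.sum (fun m e => e * a m) := by
  rw [Finsupp.sum_fintype u (fun m e => e * a m) (by simp)]; rfl

lemma degN_add {n : ℕ} (a : Fin n → ℕ) (u v : Fin n →₀ ℕ) :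
    degN a (u + v) = degN a u + degN a v := by
  simp [degN, add_mul, Finset.sum_add_distrib]

lemma degN_single {n : ℕ} (a : Fin n → ℕ) (m : Fin n) (e : ℕ) :
    degN a (Finsupp.single m e) = e * a m := by
  rw [degN_eq_sum, Finsupp.sum_single_index]; simp

lemma degN_mono {n : ℕ} (a : Fin n → ℕ) {u v : Fin n →₀ ℕ} (h : u ≤ v) :
    degN a u ≤ degN a v := by
  refine Finset.sum_le_sum fun m _ => Nat.mul_le_mul_right _ ?_
  exact Finsupp.le_def.1 h m

lemma degN_lt {n : ℕ} (a : Fin n → ℕ) (ha : ∀ m, 0 < a m) {u v : Fin n →₀ ℕ}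
    (h : u ≤ v) (hne : u ≠ v) : degN a u < degN a v := by
  obtain ⟨m, hm⟩ : ∃ m, u m ≠ v m := by
    by_contra h'; push_neg at h'; exact hne (Finsupp.ext h')
  refine Finset.sum_lt_sum (fun m _ => Nat.mul_le_mul_right _ (Finsupp.le_def.1 h m))
    ⟨m, Finset.mem_univ m, ?_⟩
  exact (Nat.mul_lt_mul_right (ha m)).2 (lt_of_le_of_ne (Finsupp.le_def.1 h m) hm)

lemma binom_mem {n : ℕ} (a : Fin n → ℕ) {u v : Fin n →₀ ℕ} (h : degN a u = degN a v) :
    (monomial u (1 : K) - monomial v (1 : K)) ∈ curveIdeal K a :=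
  Ideal.subset_span ⟨u, v, h, rfl⟩

lemma aeval_X_pow_monomial {n : ℕ} (a : Fin n → ℕ) (u : Fin n →₀ ℕ) :
    (aeval fun m => (Polynomial.X : Polynomial K) ^ a m) (monomial u (1 : K)) =
      Polynomial.X ^ degN a u := by
  rw [aeval_monomial, map_one, one_mul, degN_eq_sum]
  rw [Finsupp.prod, Finsupp.sum]
  rw [show ∏ m ∈ u.support, ((Polynomial.X : Polynomial K) ^ a m) ^ u m
      = ∏ m ∈ u.support, (Polynomial.X : Polynomial K) ^ (u m * a m) from
    Finset.prod_congr rfl fun m _ => by rw [← pow_mul, mul_comm]]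
  exact Finset.prod_pow_eq_pow_sum _ _ _

lemma degN_eq_of_mem {n : ℕ} (a : Fin n → ℕ) {u v : Fin n →₀ ℕ}
    (h : (monomial u (1 : K) - monomial v (1 : K)) ∈ curveIdeal K a) :
    degN a u = degN a v := by
  have hker : curveIdeal K a ≤
      RingHom.ker (aeval fun m => (Polynomial.X : Polynomial K) ^ a m :
        MvPolynomial (Fin n) K →ₐ[K] Polynomial K).toRingHom := by
    rw [curveIdeal, Ideal.span_le]
    rintro f ⟨p, q, hpq, rfl⟩
    simp only [SetLike.mem_coe, RingHom.mem_ker, AlgHom.toRingHom_eq_coe, RingHom.coe_coe,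
      map_sub, aeval_X_pow_monomial, hpq, sub_self]
  have h0 : (aeval fun m => (Polynomial.X : Polynomial K) ^ a m)
      (monomial u (1:K) - monomial v 1) = 0 := hker h
  rw [map_sub, aeval_X_pow_monomial, aeval_X_pow_monomial, sub_eq_zero] at h0
  have := congrArg Polynomial.natDegree h0
  simpa [Polynomial.natDegree_X_pow] using this

lemma exists_primitive {n : ℕ} (a : Fin n → ℕ) :
    ∀ (N : ℕ) (u v : Fin n →₀ ℕ), degN (fun _ => 1) u + degN (fun _ => 1) v ≤ N →
      u ≠ v → (monomial u (1 : K) - monomial v (1 : K)) ∈ curveIdeal K a →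
      ∃ p q, p ≤ u ∧ q ≤ v ∧ IsPrimitive K a p q := by
  intro N
  induction N with
  | zero =>
    intro u v hN huv _
    exfalso
    have hz : degN (fun _ => (1:ℕ)) (0 : Fin n →₀ ℕ) = 0 := by simp [degN]
    have h1 : ∀ m, 0 < (fun _ : Fin n => 1) m := fun _ => one_pos
    have hu0 : u = 0 := by
      by_contra h
      have := degN_lt (fun _ => 1) h1 (zero_le : 0 ≤ u) (Ne.symm h)
      omega
    have hv0 : v = 0 := by
      by_contra h
      have := degN_lt (fun _ => 1) h1 (zero_le : 0 ≤ v) (Ne.symm h)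
      omega
    exact huv (hu0.trans hv0.symm)
  | succ N ih =>
    intro u v hN huv hmem
    by_cases hP : ∀ u' v' : Fin n →₀ ℕ, u' ≤ u → v' ≤ v → u' ≠ v' →
        (monomial u' (1 : K) - monomial v' (1 : K)) ∈ curveIdeal K a → u' = u ∧ v' = v
    · refine ⟨u, v, le_refl u, le_refl v, ?_⟩
      exact ⟨huv, hmem, hP⟩
    · push_neg at hP
      obtain ⟨u', v', hu', hv', hne', hmem', hnot⟩ := hP
      have h1 : ∀ m, 0 < (fun _ : Fin n => 1) m := fun _ => one_pos
      have hlt : degN (fun _ => 1) u' + degN (fun _ => 1) v' <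
          degN (fun _ => 1) u + degN (fun _ => 1) v := by
        by_cases hu : u' = u
        · have hv : v' ≠ v := hnot hu
          have := degN_lt (fun _ => 1) h1 hv' hv
          have := degN_mono (n := n) (fun _ => 1) hu'
          omega
        · have := degN_lt (fun _ => 1) h1 hu' hu
          have := degN_mono (n := n) (fun _ => 1) hv'
          omega
      obtain ⟨p, q, hp, hq, hprim⟩ := ih u' v' (by omega) hne' hmem'
      exact ⟨p, q, hp.trans hu', hq.trans hv', hprim⟩

set_option maxHeartbeats 2000000 in
/-- Let `f = x_i^{u_i} x_j^{u_j} - x_k^{u_k} x_l^{u_l}` be a primitive binomial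
of `I_A` with `i, j, k, l` pairwise distinct, `0 < u_i < c_i` and `0 < u_k < c_k`. If the
`A`-degree `u_i a_i + u_j a_j` of `f` is minimal among the `A`-degrees of all primitive binomials
of `I_A`, then `f` is an indispensable binomial of `J = I_A ∩ k[x_i, x_j, x_k, x_l]` (the toric
ideal of `{a_i, a_j, a_k, a_l}`). -/
theorem statement16 {n : ℕ} (a c : Fin n → ℕ) (ha : ∀ i, 0 < a i)
    (hgcd : Finset.univ.gcd a = 1) (hc : ∀ i, IsCritExp a i (c i))
    (i j k l : Fin n) (hij : i ≠ j) (hik : i ≠ k) (hil : i ≠ l) (hjk : j ≠ k)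
    (hjl : j ≠ l) (hkl : k ≠ l) (ui uj uk ul : ℕ)
    (hprim : IsPrimitive K a (Finsupp.single i ui + Finsupp.single j uj)
      (Finsupp.single k uk + Finsupp.single l ul))
    (hi0 : 0 < ui) (hi : ui < c i) (hk0 : 0 < uk) (hk : uk < c k)
    (hmin : ∀ u' v' : Fin n →₀ ℕ, IsPrimitive K a u' v' →
      ui * a i + uj * a j ≤ degN a u') :
    IndispBinomial K (curveIdeal K ![a i, a j, a k, a l])
      (monomial (Finsupp.single (0 : Fin 4) ui + Finsupp.single (1 : Fin 4) uj) (1 : K) -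
        monomial (Finsupp.single (2 : Fin 4) uk + Finsupp.single (3 : Fin 4) ul) (1 : K)) := by
  intro S hS
  obtain ⟨hSb, hSspan⟩ := hS
  set b : Fin 4 → ℕ := ![a i, a j, a k, a l] with hb
  have hb0 : b 0 = a i := rfl
  have hb1 : b 1 = a j := rfl
  have hb2 : b 2 = a k := rfl
  have hb3 : b 3 = a l := rfl
  have hbpos : ∀ m : Fin 4, 0 < b m := by
    intro m; fin_cases m <;> simpa [hb] using ha _
  set d := ui * a i + uj * a j with hd
  set U : Fin n →₀ ℕ := Finsupp.single i ui + Finsupp.single j uj with hU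
  set V : Fin n →₀ ℕ := Finsupp.single k uk + Finsupp.single l ul with hV
  have hdegU : degN a U = d := by rw [hU, degN_add, degN_single, degN_single]
  have hdegV : degN a V = uk * a k + ul * a l := by
    rw [hV, degN_add, degN_single, degN_single]
  have hdeq : d = uk * a k + ul * a l := by
    rw [← hdegU, ← hdegV]; exact degN_eq_of_mem K a hprim.2.1
  -- positivity of uj and ul
  have huj : 0 < uj := by
    by_contra h
    push_neg at h
    have huj0 : uj = 0 := Nat.le_zero.1 h
    have hVi : V i = 0 := by
      simp [hV, Finsupp.single_apply, Ne.symm hik, Ne.symm hil]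
    have hrep : ui * a i = degN a V := by
      rw [hdegV, ← hdeq, hd, huj0]; ring
    have := (hc i).2 ⟨hi0, V, hVi, hrep⟩
    omega
  have hul : 0 < ul := by
    by_contra h
    push_neg at h
    have hul0 : ul = 0 := Nat.le_zero.1 h
    have hUk : U k = 0 := by
      simp [hU, Finsupp.single_apply, hik, hjk]
    have hrep : uk * a k = degN a U := by
      rw [hdegU, hdeq, hul0]; ring
    have := (hc k).2 ⟨hk0, U, hUk, hrep⟩
    omega
  -- no binomial of I_A of degree < d
  have no_small : ∀ p q : Fin n →₀ ℕ, p ≠ q → degN a p = degN a q →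
      degN a p < d → False := by
    intro p q hne hdeg hlt
    obtain ⟨p', q', hp', hq', hPrim⟩ := exists_primitive K a
      (degN (fun _ => 1) p + degN (fun _ => 1) q) p q le_rfl hne (binom_mem K a hdeg)
    have h1 := hmin p' q' hPrim
    have h2 : degN a p' ≤ degN a p := degN_mono a hp'
    omega
  -- transfer to 4 variables
  set gm : Fin 4 → Fin n := ![i, j, k, l] with hgm
  have hgmv : ∀ p : Fin 4, b p = a (gm p) := by intro p; fin_cases p <;> rfl
  have hginj : Function.Injective gm := by
    intro x y hxy
    fin_cases x <;> fin_cases y <;>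
      first
        | rfl
        | exact absurd hxy hij | exact absurd hxy hik | exact absurd hxy hil
        | exact absurd hxy hjk | exact absurd hxy hjl | exact absurd hxy hkl
        | exact absurd hxy.symm hij | exact absurd hxy.symm hik
        | exact absurd hxy.symm hil | exact absurd hxy.symm hjk
        | exact absurd hxy.symm hjl | exact absurd hxy.symm hkl
  have hdegL : ∀ p : Fin 4 →₀ ℕ, degN a (Finsupp.mapDomain gm p) = degN b p := by
    intro p
    have hmap := Finsupp.sum_mapDomain_index (f := gm) (s := p)
      (h := fun (m : Fin n) (e : ℕ) => e * a m) (fun _ => zero_mul _)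
      (fun _ m₁ m₂ => add_mul m₁ m₂ _)
    rw [degN_eq_sum, hmap, degN_eq_sum]
    exact Finsupp.sum_congr fun m _ => by rw [hgmv m]
  have no_small4 : ∀ p q : Fin 4 →₀ ℕ, p ≠ q → degN b p = degN b q →
      degN b p < d → False := by
    intro p q hne hdeg hlt
    exact no_small _ _ (fun h => hne (Finsupp.mapDomain_injective hginj h))
      (by rw [hdegL, hdegL, hdeg]) (by rw [hdegL]; exact hlt)
  set M1 : Fin 4 →₀ ℕ := Finsupp.single (0 : Fin 4) ui + Finsupp.single (1 : Fin 4) uj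
    with hM1
  set M2 : Fin 4 →₀ ℕ := Finsupp.single (2 : Fin 4) uk + Finsupp.single (3 : Fin 4) ul
    with hM2
  have hdM1 : degN b M1 = d := by
    rw [hM1, degN_add, degN_single, degN_single, hb0, hb1]
  have hdM2 : degN b M2 = d := by
    rw [hM2, degN_add, degN_single, degN_single, hb2, hb3, hdeq]
  -- the key uniqueness lemma
  have key : ∀ p q : Fin 4 →₀ ℕ, p ≠ q →
      (monomial p (1 : K) - monomial q 1) ∈ curveIdeal K b → p ≤ M1 →
      p = M1 ∧ q = M2 := by
    intro p q hpq hmem hle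
    have hdeg : degN b p = degN b q := degN_eq_of_mem K b hmem
    have hpM1 : p = M1 := by
      by_contra h
      exact no_small4 p q hpq hdeg (by
        calc degN b p < degN b M1 := degN_lt b hbpos hle h
          _ = d := hdM1)
    refine ⟨hpM1, ?_⟩
    have hdq : degN b q = d := by rw [← hdeg, hpM1, hdM1]
    have hq0 : q 0 = 0 := by
      by_contra h
      have h0 : 0 < q 0 := Nat.pos_of_ne_zero h
      have hle1 : Finsupp.single (0 : Fin 4) 1 ≤ q := Finsupp.single_le_iff.2 h0
      obtain ⟨q', hqd⟩ : ∃ q', q' + Finsupp.single (0 : Fin 4) 1 = q :=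
        ⟨q - Finsupp.single (0 : Fin 4) 1, tsub_add_cancel_of_le hle1⟩
      obtain ⟨p', hpd⟩ : ∃ p', p' + Finsupp.single (0 : Fin 4) 1 = M1 :=
        ⟨Finsupp.single (0 : Fin 4) (ui - 1) + Finsupp.single (1 : Fin 4) uj, by
          rw [hM1, add_right_comm, ← Finsupp.single_add]
          congr 2
          omega⟩
      have hdp' : degN b p' + 1 * a i = d := by
        rw [← hdM1, ← hpd, degN_add, degN_single, hb0]
      have hdq'0 : degN b q' + 1 * a i = d := by
        rw [← hdq, ← hqd, degN_add, degN_single, hb0]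
      have hne' : p' ≠ q' := by
        intro hcontra
        apply hpq
        rw [hpM1, ← hpd, ← hqd, hcontra]
      exact no_small4 p' q' hne' (by omega) (by have := ha i; omega)
    have hq1 : q 1 = 0 := by
      by_contra h
      have h0 : 0 < q 1 := Nat.pos_of_ne_zero h
      have hle1 : Finsupp.single (1 : Fin 4) 1 ≤ q := Finsupp.single_le_iff.2 h0
      obtain ⟨q', hqd⟩ : ∃ q', q' + Finsupp.single (1 : Fin 4) 1 = q :=
        ⟨q - Finsupp.single (1 : Fin 4) 1, tsub_add_cancel_of_le hle1⟩
      obtain ⟨p', hpd⟩ : ∃ p', p' + Finsupp.single (1 : Fin 4) 1 = M1 :=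
        ⟨Finsupp.single (0 : Fin 4) ui + Finsupp.single (1 : Fin 4) (uj - 1), by
          rw [hM1, add_assoc, ← Finsupp.single_add]
          congr 2
          omega⟩
      have hdp' : degN b p' + 1 * a j = d := by
        rw [← hdM1, ← hpd, degN_add, degN_single, hb1]
      have hdq'0 : degN b q' + 1 * a j = d := by
        rw [← hdq, ← hqd, degN_add, degN_single, hb1]
      have hne' : p' ≠ q' := by
        intro hcontra
        apply hpq
        rw [hpM1, ← hpd, ← hqd, hcontra]
      exact no_small4 p' q' hne' (by omega) (by have := ha j; omega)
    have hqrep : q = Finsupp.single (2 : Fin 4) (q 2) + Finsupp.single (3 : Fin 4) (q 3) := by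
      ext m
      fin_cases m <;>
        simp [Finsupp.single_apply, hq0, hq1]
    have e : degN b (Finsupp.single (2 : Fin 4) (q 2) + Finsupp.single (3 : Fin 4) (q 3))
        = q 2 * a k + q 3 * a l := by
      rw [degN_add, degN_single, degN_single, hb2, hb3]
    rw [← hqrep] at e
    have hdq2 : q 2 * a k + q 3 * a l = uk * a k + ul * a l := by
      rw [← e, hdq, hdeq]
    rcases Nat.lt_trichotomy (q 2) uk with hlt | heq | hgt
    · exfalso
      obtain ⟨e1, h9⟩ : ∃ e1, uk = q 2 + e1 := ⟨uk - q 2, by omega⟩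
      have he1 : 0 < e1 := by omega
      have h10 : q 3 * a l = e1 * a k + ul * a l := by
        rw [h9, add_mul] at hdq2; linarith
      have h11 : ul < q 3 := by
        have h1 : 0 < e1 * a k := Nat.mul_pos he1 (ha k)
        have h2 : ul * a l < q 3 * a l := by linarith
        exact lt_of_mul_lt_mul_right h2 (Nat.zero_le _)
      obtain ⟨e2, h12⟩ : ∃ e2, q 3 = ul + e2 := ⟨q 3 - ul, by omega⟩
      have h13 : e2 * a l = e1 * a k := by rw [h12, add_mul] at h10; linarith
      refine no_small (Finsupp.single k e1) (Finsupp.single l e2) ?_ ?_ ?_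
      · intro hcontra
        have := DFunLike.congr_fun hcontra k
        simp [Finsupp.single_apply, Ne.symm hkl] at this
        omega
      · rw [degN_single, degN_single, h13]
      · rw [degN_single]
        have h14 : e1 * a k ≤ uk * a k := Nat.mul_le_mul_right _ (by omega)
        have h15 : 0 < ul * a l := Nat.mul_pos hul (ha l)
        linarith [hdeq]
    · have h16 : q 3 * a l = ul * a l := by
        rw [heq] at hdq2; linarith
      have h17 : q 3 = ul := Nat.eq_of_mul_eq_mul_right (ha l) h16
      rw [hqrep, heq, h17, hM2]
    · exfalso
      obtain ⟨e1, h9⟩ : ∃ e1, q 2 = uk + e1 := ⟨q 2 - uk, by omega⟩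
      have he1 : 0 < e1 := by omega
      have h10 : e1 * a k + q 3 * a l = ul * a l := by
        rw [h9, add_mul] at hdq2; linarith
      have h11 : q 3 < ul := by
        have h1 : 0 < e1 * a k := Nat.mul_pos he1 (ha k)
        have h2 : q 3 * a l < ul * a l := by linarith
        exact lt_of_mul_lt_mul_right h2 (Nat.zero_le _)
      obtain ⟨e2, h12⟩ : ∃ e2, ul = q 3 + e2 := ⟨ul - q 3, by omega⟩
      have h13 : e2 * a l = e1 * a k := by rw [h12, add_mul] at h10; linarith
      refine no_small (Finsupp.single l e2) (Finsupp.single k e1) ?_ ?_ ?_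
      · intro hcontra
        have := DFunLike.congr_fun hcontra l
        simp [Finsupp.single_apply, hkl] at this
        omega
      · rw [degN_single, degN_single, h13]
      · rw [degN_single]
        have h14 : e2 * a l ≤ ul * a l := Nat.mul_le_mul_right _ (by omega)
        have h15 : 0 < uk * a k := Nat.mul_pos hk0 (ha k)
        linarith [hdeq]
  -- now the main argument
  have hM2ne : M2 ≠ M1 := by
    intro hcontra
    have := DFunLike.congr_fun hcontra 0
    simp [hM1, hM2, Finsupp.single_apply] at this
    omega
  have hfJ : (monomial M1 (1 : K) - monomial M2 1) ∈ curveIdeal K b :=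
    binom_mem K b (by rw [hdM1, hdM2])
  rw [← hSspan] at hfJ
  obtain ⟨co, hsup, hsum⟩ := Submodule.mem_span_set.1 hfJ
  have hne0 : MvPolynomial.coeff M1 (co.sum fun g r => r • g) ≠ 0 := by
    rw [hsum, MvPolynomial.coeff_sub, MvPolynomial.coeff_monomial,
      MvPolynomial.coeff_monomial, if_pos rfl, if_neg hM2ne]
    simp
  rw [Finsupp.sum, MvPolynomial.coeff_sum] at hne0
  obtain ⟨g, hgmem, hgne⟩ := Finset.exists_ne_zero_of_sum_ne_zero hne0
  have hgS : g ∈ S := hsup hgmem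
  obtain ⟨p, q, hgpq⟩ := hSb g hgS
  have hgJ : (monomial p (1 : K) - monomial q 1) ∈ curveIdeal K b := by
    rw [← hgpq, ← hSspan]; exact Ideal.subset_span hgS
  have hpq : p ≠ q := by
    intro h
    apply hgne
    rw [hgpq, h, sub_self, smul_zero, MvPolynomial.coeff_zero]
  have hdiv : p ≤ M1 ∨ q ≤ M1 := by
    by_contra hcon
    push_neg at hcon
    apply hgne
    rw [hgpq, smul_eq_mul, mul_sub, MvPolynomial.coeff_sub,
      MvPolynomial.coeff_mul_monomial', MvPolynomial.coeff_mul_monomial',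
      if_neg (by exact fun h => hcon.1 h), if_neg (by exact fun h => hcon.2 h)]
    simp
  rcases hdiv with hle | hle
  · obtain ⟨hp, hq⟩ := key p q hpq hgJ hle
    left
    rw [show (monomial M1 (1 : K) - monomial M2 1) = g from by rw [hgpq, hp, hq]]
    exact hgS
  · have hgJ' : (monomial q (1 : K) - monomial p 1) ∈ curveIdeal K b := by
      have := (curveIdeal K b).neg_mem hgJ
      rwa [neg_sub] at this
    obtain ⟨hq', hp'⟩ := key q p (Ne.symm hpq) hgJ' hle
    right
    rw [show -(monomial M1 (1 : K) - monomial M2 1) = g from by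
      rw [hgpq, hq', hp', neg_sub]]
    exact hgS
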